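/- Let p > 3 be a prime, m a positive integer, and n = 2m, and suppose p^m ≡ 1 (mod 3). Then the power mapping F(x) = x^{p^m+2} over F_{p^n} is differentially 2-uniform (i.e., max over b of δ(b) equals 2), and its differential spectrum is given by ω_0 = (p^n - 1)/2, ω_1 = 1, ω_2 = (p^n - 1)/2, and ω_i = 0 for all i > 2. -/
import Mathlib


/-- The number of `x` in the field `F` with `(x+1)^d - x^d = b`. -/
def deltaF (F : Type*) [Field F] [Fintype F] [DecidableEq F] (d : ℕ) (b : F) : ℕ :=
  (Finset.univ.filter (fun x : F => (x + 1) ^ d - x ^ d = b)).card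

/-- The number of `b` in the field `F` with `deltaF F d b = i`. -/
def omegaF (F : Type*) [Field F] [Fintype F] [DecidableEq F] (d i : ℕ) : ℕ :=
  (Finset.univ.filter (fun b : F => deltaF F d b = i)).card

section AuxStmt16

variable {F : Type*} [Field F]

/-- If `φ c = -c`, `φ a = a`, `φ e = e`, `e² = -3` and `3a² + c² = 0` then `a = c = 0`. -/
private lemma stmt16_anti_zero (φ : F →+* F) (e a c : F)
    (h2 : (2 : F) ≠ 0) (h3 : (3 : F) ≠ 0)
    (he : e ^ 2 = -3) (heφ : φ e = e) (ha : φ a = a) (hc : φ c = -c)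
    (h : 3 * a ^ 2 + c ^ 2 = 0) : a = 0 ∧ c = 0 := by
  have he0 : e ≠ 0 := by
    intro h0
    apply h3
    rw [h0] at he
    linear_combination he
  have hfac : (c - e * a) * (c + e * a) = 0 := by linear_combination h - a ^ 2 * he
  have hc0 : c = 0 := by
    have hcc : c = -c → c = 0 := by
      intro hcc
      have : (2 : F) * c = 0 := by linear_combination hcc
      exact (mul_eq_zero.mp this).resolve_left h2
    rcases mul_eq_zero.mp hfac with h' | h'
    · have hce : c = e * a := by linear_combination h'
      have hφc : φ c = c := by rw [hce, map_mul, heφ, ha]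
      exact hcc (hφc.symm.trans hc)
    · have hce : c = -(e * a) := by linear_combination h'
      have hφc : φ c = c := by rw [hce, map_neg, map_mul, heφ, ha]
      exact hcc (hφc.symm.trans hc)
  have ha0 : a = 0 := by
    rw [hc0] at h
    have h3a : (3 : F) * a ^ 2 = 0 := by linear_combination h
    have := (mul_eq_zero.mp h3a).resolve_left h3
    exact pow_eq_zero_iff (n := 2) (by norm_num) |>.mp this
  exact ⟨ha0, hc0⟩

private lemma stmt16_key_ac (φ : F →+* F) (e a c a' c' : F)
    (h2 : (2 : F) ≠ 0) (h3 : (3 : F) ≠ 0)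
    (he : e ^ 2 = -3) (heφ : φ e = e)
    (ha : φ a = a) (hc : φ c = -c) (ha' : φ a' = a') (hc' : φ c' = -c')
    (h1 : 3 * a ^ 2 - c ^ 2 = 3 * a' ^ 2 - c' ^ 2) (hq : a * c = a' * c') :
    (a = a' ∧ c = c') ∨ (a = -a' ∧ c = -c') := by
  have hstep : (3 : F) * ((a ^ 2 - a' ^ 2) * (3 * a ^ 2 + c' ^ 2)) = 0 := by
    linear_combination (3 * a ^ 2) * h1 + 3 * (a * c + a' * c') * hq
  have hstep' := (mul_eq_zero.mp hstep).resolve_left h3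
  rcases mul_eq_zero.mp hstep' with haa | hdeg
  · -- a² = a'²
    have hfac : (a - a') * (a + a') = 0 := by linear_combination haa
    rcases mul_eq_zero.mp hfac with h' | h'
    · have heq : a = a' := by linear_combination h'
      by_cases ha0 : a = 0
      · have ha'0 : a' = 0 := by rw [← heq, ha0]
        have hcc : (c - c') * (c + c') = 0 := by
          rw [ha0, ha'0] at h1
          linear_combination -h1
        rcases mul_eq_zero.mp hcc with h'' | h''
        · exact Or.inl ⟨heq, by linear_combination h''⟩
        · exact Or.inr ⟨by rw [ha0, ha'0, neg_zero], by linear_combination h''⟩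
      · left
        refine ⟨heq, mul_left_cancel₀ ha0 ?_⟩
        rw [hq, ← heq]
    · have heq : a = -a' := by linear_combination h'
      by_cases ha0 : a = 0
      · have ha'0 : a' = 0 := by
          have : -a' = (0 : F) := by rw [← heq, ha0]
          linear_combination -this
        have hcc : (c - c') * (c + c') = 0 := by
          rw [ha0, ha'0] at h1
          linear_combination -h1
        rcases mul_eq_zero.mp hcc with h'' | h''
        · exact Or.inl ⟨by rw [ha0, ha'0], by linear_combination h''⟩
        · exact Or.inr ⟨by rw [ha0, ha'0, neg_zero], by linear_combination h''⟩
      · right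
        refine ⟨heq, ?_⟩
        have ha'0 : a' ≠ 0 := by
          intro h0
          apply ha0
          rw [heq, h0, neg_zero]
        have : a' * c' = a' * (-c) := by linear_combination -hq + c * heq
        have := mul_left_cancel₀ ha'0 this
        linear_combination this
  · -- 3a² + c'² = 0, degenerate case
    obtain ⟨ha0, hc'0⟩ := stmt16_anti_zero φ e a c' h2 h3 he heφ ha hc' hdeg
    have hdeg2 : 3 * a' ^ 2 + c ^ 2 = 0 := by
      rw [ha0, hc'0] at h1
      linear_combination -h1
    obtain ⟨ha'0, hc0⟩ := stmt16_anti_zero φ e a' c h2 h3 he heφ ha' hc hdeg2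
    exact Or.inl ⟨by rw [ha0, ha'0], by rw [hc0, hc'0]⟩

/-- Key structural lemma: solutions to `D x = D y` come in pairs `y = x` or `y = -1 - x`. -/
private lemma stmt16_key (φ : F →+* F) (q : ℕ) (e : F)
    (hφ : ∀ x : F, φ x = x ^ q) (hφφ : ∀ x : F, φ (φ x) = x)
    (h2 : (2 : F) ≠ 0) (h3 : (3 : F) ≠ 0)
    (he : e ^ 2 = -3) (heφ : φ e = e)
    (x y : F) (h : (x + 1) ^ (q + 2) - x ^ (q + 2) = (y + 1) ^ (q + 2) - y ^ (q + 2)) :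
    y = x ∨ y = -1 - x := by
  have hD : ∀ z : F, (z + 1) ^ (q + 2) - z ^ (q + 2)
      = (φ z + 1) * (z + 1) ^ 2 - φ z * z ^ 2 := by
    intro z
    rw [pow_add, pow_add, ← hφ (z + 1), ← hφ z, map_add, map_one]
  rw [hD x, hD y] at h
  have h' : (x + 1) * (φ x + 1) ^ 2 - x * (φ x) ^ 2
      = (y + 1) * (φ y + 1) ^ 2 - y * (φ y) ^ 2 := by
    have := congrArg φ h
    simpa only [map_sub, map_mul, map_add, map_one, map_pow, hφφ] using this
  set u := φ x with hu
  set v := φ y with hv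
  have hau : φ (x + u + 1) = x + u + 1 := by
    rw [map_add, map_add, map_one, hφφ, hu]; ring
  have hcu : φ (x - u) = -(x - u) := by
    rw [map_sub, hφφ, hu]; ring
  have hav : φ (y + v + 1) = y + v + 1 := by
    rw [map_add, map_add, map_one, hφφ, hv]; ring
  have hcv : φ (y - v) = -(y - v) := by
    rw [map_sub, hφφ, hv]; ring
  have h1 : 3 * (x + u + 1) ^ 2 - (x - u) ^ 2 = 3 * (y + v + 1) ^ 2 - (y - v) ^ 2 := by
    linear_combination 2 * h + 2 * h'
  have hq2 : (x + u + 1) * (x - u) = (y + v + 1) * (y - v) := by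
    linear_combination h - h'
  rcases stmt16_key_ac φ e (x + u + 1) (x - u) (y + v + 1) (y - v)
      h2 h3 he heφ hau hcu hav hcv h1 hq2 with ⟨hA, hC⟩ | ⟨hA, hC⟩
  · left
    have : (2 : F) * y = 2 * x := by linear_combination -hA - hC
    exact mul_left_cancel₀ h2 this
  · right
    have : (2 : F) * y = 2 * (-1 - x) := by linear_combination hA + hC
    exact mul_left_cancel₀ h2 this

end AuxStmt16

/-- Let `p > 3` be prime, `n = 2m`, `p^m ≡ 1 (mod 3)`. Then `x^(p^m+2)` over `F_{p^n}` is
differentially 2-uniform and its differential spectrum is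
`ω₀ = (p^n - 1)/2`, `ω₁ = 1`, `ω₂ = (p^n - 1)/2`, `ωᵢ = 0` for `i > 2`. -/
theorem stmt16 (p : ℕ) (hp : p.Prime) (hp3 : 3 < p) (m : ℕ) (hm : 0 < m) (n : ℕ)
    (hn : n = 2 * m) (hmod : p ^ m % 3 = 1)
    (F : Type*) [Field F] [Fintype F] [DecidableEq F]
    (hF : Fintype.card F = p ^ n) :
    (Finset.univ.sup (fun b : F => deltaF F (p ^ m + 2) b) = 2) ∧
    omegaF F (p ^ m + 2) 0 = (p ^ n - 1) / 2 ∧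
    omegaF F (p ^ m + 2) 1 = 1 ∧
    omegaF F (p ^ m + 2) 2 = (p ^ n - 1) / 2 ∧
    (∀ i, 2 < i → omegaF F (p ^ m + 2) i = 0) := by
  haveI : Fact p.Prime := ⟨hp⟩
  set q : ℕ := p ^ m with hqdef
  set d : ℕ := q + 2 with hddef
  -- characteristic
  have hn0 : n ≠ 0 := by omega
  have hchar : ringChar F = p := by
    have hdvd : p ∣ Fintype.card F := by
      rw [hF]
      exact dvd_pow_self p hn0
    have hpr : (ringChar F).Prime := CharP.char_is_prime F (ringChar F)
    have : p ∣ ringChar F := (prime_dvd_char_iff_dvd_card p).mpr hdvd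
    exact ((Nat.prime_dvd_prime_iff_eq hp hpr).mp this).symm
  haveI hCharP : CharP F p := ringChar.of_eq hchar
  have h2 : (2 : F) ≠ 0 := by
    intro h
    have := (CharP.cast_eq_zero_iff F p 2).mp (by exact_mod_cast h)
    have := Nat.le_of_dvd (by norm_num) this
    omega
  have h3 : (3 : F) ≠ 0 := by
    intro h
    have := (CharP.cast_eq_zero_iff F p 3).mp (by exact_mod_cast h)
    have := Nat.le_of_dvd (by norm_num) this
    omega
  -- Frobenius
  set φ : F →+* F := iterateFrobenius F p m with hφdef
  have hφ : ∀ x : F, φ x = x ^ q := fun x => iterateFrobenius_def p m x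
  have hφφ : ∀ x : F, φ (φ x) = x := by
    intro x
    rw [hφ, hφ, ← pow_mul, hqdef, ← pow_add, ← two_mul, ← hn, ← hF]
    exact FiniteField.pow_card x
  -- cube root of unity and square root of -3
  have hq3 : q % 3 = 1 := hmod
  have hpn3 : p ^ n % 3 = 1 := by
    rw [hn, two_mul, pow_add, Nat.mul_mod, hmod]
  have h3dvd : 3 ∣ Fintype.card Fˣ := by
    rw [Fintype.card_units, hF]
    have hpn1 : 1 ≤ p ^ n := Nat.one_le_pow _ _ hp.pos
    omega
  haveI : Fact (Nat.Prime 3) := ⟨by norm_num⟩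
  obtain ⟨ζu, hζu⟩ := exists_prime_orderOf_dvd_card 3 h3dvd
  set ζ : F := (ζu : F) with hζdef
  have hζ3 : ζ ^ 3 = 1 := by
    have : ζu ^ 3 = 1 := by rw [← hζu]; exact pow_orderOf_eq_one ζu
    rw [hζdef, ← Units.val_pow_eq_pow_val, this, Units.val_one]
  have hζ1 : ζ ≠ 1 := by
    intro h
    have : ζu = 1 := Units.ext (by rw [Units.val_one]; exact h)
    rw [this, orderOf_one] at hζu
    omega
  have hζq : ζ ^ 2 + ζ + 1 = 0 := by
    have hfac : (ζ - 1) * (ζ ^ 2 + ζ + 1) = 0 := by linear_combination hζ3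
    exact (mul_eq_zero.mp hfac).resolve_left (sub_ne_zero.mpr hζ1)
  set e : F := 2 * ζ + 1 with hedef
  have he : e ^ 2 = -3 := by rw [hedef]; linear_combination 4 * hζq
  have heφ : φ e = e := by
    have hζφ : φ ζ = ζ := by
      rw [hφ]
      have : q = 3 * (q / 3) + 1 := by omega
      rw [this, pow_add, pow_mul, hζ3, one_pow, pow_one, one_mul]
    rw [hedef, map_add, map_mul, map_one, hζφ]
    congr 1
    congr 1
    exact map_ofNat φ 2
  -- the key dichotomy
  have key : ∀ x y : F, (x + 1) ^ d - x ^ d = (y + 1) ^ d - y ^ d → y = x ∨ y = -1 - x :=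
    fun x y h => stmt16_key φ q e hφ hφφ h2 h3 he heφ x y h
  -- delta is at most 2
  have hD2 : ∀ b : F, deltaF F d b ≤ 2 := by
    intro b
    by_contra hcon
    push_neg at hcon
    rw [deltaF] at hcon
    obtain ⟨x, hx, y, hy, z, hz, hxy, hxz, hyz⟩ := Finset.two_lt_card.mp hcon
    rw [Finset.mem_filter] at hx hy hz
    have hy' := (key x y (hx.2.trans hy.2.symm)).resolve_left (fun h => hxy h.symm)
    have hz' := (key x z (hx.2.trans hz.2.symm)).resolve_left (fun h => hxz h.symm)
    exact hyz (hy'.trans hz'.symm)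
  -- oddness of d
  have hoddp : Odd p := hp.odd_of_ne_two (by omega)
  have hoddq : Odd q := hoddp.pow
  have hoddd : Odd d := by
    obtain ⟨k, hk⟩ := hoddq
    exact ⟨k + 1, by omega⟩
  have hDneg : ∀ x : F, (-1 - x + 1) ^ d - (-1 - x) ^ d = (x + 1) ^ d - x ^ d := by
    intro x
    have e1 : (-1 - x + 1 : F) = -x := by ring
    have e2 : (-1 - x : F) = -(x + 1) := by ring
    rw [e1, e2, hoddd.neg_pow, hoddd.neg_pow]
    ring
  -- the special point
  set b₀ : F := (-(2 : F)⁻¹ + 1) ^ d - (-(2 : F)⁻¹) ^ d with hb₀def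
  have h2inv : (2 : F) * 2⁻¹ = 1 := mul_inv_cancel₀ h2
  have hfilter1 : (Finset.univ.filter (fun x : F => (x + 1) ^ d - x ^ d = b₀))
      = {-(2 : F)⁻¹} := by
    ext x
    simp only [Finset.mem_filter, Finset.mem_univ, true_and, Finset.mem_singleton]
    constructor
    · intro hx
      rcases key x (-(2 : F)⁻¹) (hx.trans rfl) with h' | h'
      · exact h'.symm
      · have : (2 : F) * x = 2 * (-2⁻¹) := by linear_combination 2 * h' + 2 * h2inv
        exact mul_left_cancel₀ h2 this
    · intro hx
      rw [hx]
  have hδb₀ : deltaF F d b₀ = 1 := by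
    rw [deltaF, hfilter1, Finset.card_singleton]
  have huniq : ∀ b : F, deltaF F d b = 1 → b = b₀ := by
    intro b hb
    rw [deltaF] at hb
    obtain ⟨x, hx⟩ := Finset.card_eq_one.mp hb
    have hxmem : x ∈ Finset.univ.filter (fun x : F => (x + 1) ^ d - x ^ d = b) := by
      rw [hx]; exact Finset.mem_singleton_self x
    have hxD : (x + 1) ^ d - x ^ d = b := (Finset.mem_filter.mp hxmem).2
    have hmem2 : (-1 - x) ∈ Finset.univ.filter (fun x : F => (x + 1) ^ d - x ^ d = b) := by
      rw [Finset.mem_filter]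
      exact ⟨Finset.mem_univ _, (hDneg x).trans hxD⟩
    rw [hx, Finset.mem_singleton] at hmem2
    have hx0 : x = -(2 : F)⁻¹ := by
      have : (2 : F) * x = 2 * (-2⁻¹) := by linear_combination -hmem2 + h2inv
      exact mul_left_cancel₀ h2 this
    rw [← hxD, hx0, hb₀def]
  -- total count
  have hsum : ∑ b : F, deltaF F d b = p ^ n := by
    have := Finset.card_eq_sum_card_fiberwise
      (f := fun x : F => (x + 1) ^ d - x ^ d) (s := Finset.univ) (t := Finset.univ)
      (fun x _ => Finset.mem_univ _)
    rw [Finset.card_univ, hF] at this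
    simp only [deltaF]
    exact this.symm
  -- pointwise decompositions
  have hpt : ∀ b : F, deltaF F d b
      = (if deltaF F d b = 1 then 1 else 0) + (if deltaF F d b = 2 then 2 else 0) := by
    intro b
    have := hD2 b
    interval_cases h : (deltaF F d b) <;> simp
  have hpt1 : ∀ b : F, (1 : ℕ)
      = (if deltaF F d b = 0 then 1 else 0) + (if deltaF F d b = 1 then 1 else 0)
        + (if deltaF F d b = 2 then 1 else 0) := by
    intro b
    have := hD2 b
    interval_cases h : (deltaF F d b) <;> simp
  -- sum computations
  have hsumsplit : p ^ n = omegaF F d 1 + 2 * omegaF F d 2 := by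
    rw [← hsum]
    calc ∑ b : F, deltaF F d b
        = ∑ b : F, ((if deltaF F d b = 1 then 1 else 0) + (if deltaF F d b = 2 then 2 else 0)) :=
          Finset.sum_congr rfl (fun b _ => hpt b)
      _ = (∑ b : F, if deltaF F d b = 1 then 1 else 0)
          + (∑ b : F, if deltaF F d b = 2 then 2 else 0) := Finset.sum_add_distrib
      _ = omegaF F d 1 + 2 * omegaF F d 2 := by
          rw [omegaF, omegaF, ← Finset.sum_filter, ← Finset.sum_filter,
            Finset.sum_const, Finset.sum_const, smul_eq_mul, smul_eq_mul, mul_one, mul_comm]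
  have hcardsplit : p ^ n = omegaF F d 0 + omegaF F d 1 + omegaF F d 2 := by
    have : (Fintype.card F : ℕ) = ∑ _b : F, (1 : ℕ) := by
      rw [Finset.sum_const, Finset.card_univ, smul_eq_mul, mul_one]
    rw [← hF, this]
    calc ∑ _b : F, (1 : ℕ)
        = ∑ b : F, ((if deltaF F d b = 0 then 1 else 0) + (if deltaF F d b = 1 then 1 else 0)
            + (if deltaF F d b = 2 then 1 else 0)) := Finset.sum_congr rfl (fun b _ => hpt1 b)
      _ = ((∑ b : F, if deltaF F d b = 0 then 1 else 0)
            + (∑ b : F, if deltaF F d b = 1 then 1 else 0))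
          + (∑ b : F, if deltaF F d b = 2 then 1 else 0) := by
            rw [Finset.sum_add_distrib, Finset.sum_add_distrib]
      _ = omegaF F d 0 + omegaF F d 1 + omegaF F d 2 := by
          rw [omegaF, omegaF, omegaF, ← Finset.sum_filter, ← Finset.sum_filter,
            ← Finset.sum_filter, Finset.sum_const, Finset.sum_const, Finset.sum_const,
            smul_eq_mul, smul_eq_mul, smul_eq_mul, mul_one, mul_one, mul_one]
  have hω1 : omegaF F d 1 = 1 := by
    rw [omegaF]
    have : (Finset.univ.filter (fun b : F => deltaF F d b = 1)) = {b₀} := by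
      ext b
      simp only [Finset.mem_filter, Finset.mem_univ, true_and, Finset.mem_singleton]
      constructor
      · exact huniq b
      · intro h; rw [h]; exact hδb₀
    rw [this, Finset.card_singleton]
  -- numeric facts
  have hple : p ≤ p ^ n := Nat.le_self_pow hn0 p
  have hoddpn : p ^ n % 2 = 1 := by
    have : p % 2 = 1 := Nat.odd_iff.mp hoddp
    rw [Nat.pow_mod, this, Nat.one_pow]
  have hω2 : omegaF F d 2 = (p ^ n - 1) / 2 := by omega
  have hω0 : omegaF F d 0 = (p ^ n - 1) / 2 := by omega
  refine ⟨?_, hω0, hω1, hω2, ?_⟩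
  · -- sup = 2
    have hsup_le : Finset.univ.sup (fun b : F => deltaF F d b) ≤ 2 :=
      Finset.sup_le (fun b _ => hD2 b)
    have hω2pos : 0 < omegaF F d 2 := by omega
    rw [omegaF] at hω2pos
    obtain ⟨b, hb⟩ := Finset.card_pos.mp hω2pos
    have hb2 : deltaF F d b = 2 := (Finset.mem_filter.mp hb).2
    have : (2 : ℕ) ≤ Finset.univ.sup (fun b : F => deltaF F d b) := by
      rw [← hb2]
      exact Finset.le_sup (Finset.mem_univ b)
    omega
  · intro i hi
    rw [omegaF, Finset.card_eq_zero, Finset.filter_eq_empty_iff]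
    intro b _
    have := hD2 b
    omega
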